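/- arXiv:1910.02249 — 2 statements merged into one kernel-verified Lean document; each statement's English description precedes it below -/
import Mathlib

section
/- For all real numbers s and t, max(σ(s + t) − σ(t), 0) ≤ max(s/4, 0). -/
/-- The sigmoid function `σ(t) = 1 / (1 + e^{-t})`. -/
noncomputable def sigmoid (t : ℝ) : ℝ := 1 / (1 + Real.exp (-t))

lemma one_add_exp_pos (x : ℝ) : 0 < 1 + Real.exp (-x) := by positivity

lemma sigmoid_hasDerivAt (x : ℝ) :
    HasDerivAt sigmoid (Real.exp (-x) / (1 + Real.exp (-x)) ^ 2) x := by
  have h : HasDerivAt (fun y : ℝ => 1 + Real.exp (-y)) (-Real.exp (-x)) x := by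
    simpa using (Real.hasDerivAt_exp (-x)).comp x ((hasDerivAt_id x).neg) |>.const_add 1
  have h2 := h.inv (ne_of_gt (one_add_exp_pos x))
  show HasDerivAt (fun y => 1 / (1 + Real.exp (-y))) _ x
  simpa [one_div, neg_div, neg_neg, Pi.inv_def] using h2

lemma deriv_bound (x : ℝ) : Real.exp (-x) / (1 + Real.exp (-x)) ^ 2 ≤ 1 / 4 := by
  have he : 0 < Real.exp (-x) := Real.exp_pos _
  rw [div_le_div_iff₀ (by positivity) (by norm_num)]
  nlinarith [sq_nonneg (1 - Real.exp (-x))]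

lemma sigmoid_mono : Monotone sigmoid := by
  intro a b hab
  unfold sigmoid
  have h1 : Real.exp (-b) ≤ Real.exp (-a) := Real.exp_le_exp.mpr (by linarith)
  have := one_add_exp_pos b
  gcongr 1 / ?_
  linarith

/-- For all reals `s` and `t`, `max(σ(s + t) - σ(t), 0) ≤ max(s/4, 0)`. -/
theorem mpl_le_score (s t : ℝ) :
    max (sigmoid (s + t) - sigmoid t) 0 ≤ max (s / 4) 0 := by
  rcases le_or_gt s 0 with hs | hs
  · have : sigmoid (s + t) ≤ sigmoid t := sigmoid_mono (by linarith)
    simp [max_le_iff, this, le_max_right]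
  · have hlt : t < s + t := by linarith
    obtain ⟨c, _, hc⟩ := exists_hasDerivAt_eq_slope sigmoid
      (fun x => Real.exp (-x) / (1 + Real.exp (-x)) ^ 2) hlt
      (fun x _ => (sigmoid_hasDerivAt x).continuousAt.continuousWithinAt)
      (fun x _ => sigmoid_hasDerivAt x)
    have hb := deriv_bound c
    rw [hc] at hb
    have hss : s + t - t = s := by ring
    rw [hss] at hb
    have : sigmoid (s + t) - sigmoid t ≤ s / 4 := by
      rw [div_le_div_iff₀ hs (by norm_num)] at hb
      linarith
    calc max (sigmoid (s + t) - sigmoid t) 0 ≤ max (s/4) 0 := by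
          exact max_le_max this le_rfl
end

section
/- Let π be a probability measure on a measurable space Θ, B ≥ 0 a constant, and l_1, …, l_n : Θ → ℝ measurable functions with |l_i(θ)| ≤ B for all i and θ. Define Z_D = ∫ exp(−∑_{i=1}^{n} l_i(θ)) dπ(θ) and Z_S = ∫ exp(−∑_{i=1}^{n−1} l_i(θ)) dπ(θ), and let p_D and p_S be the probability measures on Θ with densities exp(−∑_{i=1}^{n} l_i)/Z_D and exp(−∑_{i=1}^{n−1} l_i)/Z_S with respect to π, respectively. Then for every measurable g : Θ → ℝ with |g(θ)| ≤ B for all θ, |∫ g dp_S − ∫ g dp_D| ≤ B(e^{2B} − 1). -/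
open MeasureTheory
open scoped NNReal ENNReal

/-- Bound of the leave-one-out error (paper's Lemma 2). Let `π` be a prior over
parameters, `l i` the per-sample negative log-likelihoods bounded by `B`, `p_D` the
posterior given samples `z_1, …, z_n` and `p_S` the posterior given `z_1, …, z_{n-1}`
(densities `exp(-∑ l_i)/Z` w.r.t. `π`). Then for any `g` bounded by `B`,
`|E_{p_S}[g] - E_{p_D}[g]| ≤ B(e^{2B} - 1)`. -/
theorem leave_one_out_bound {Θ : Type*} [MeasurableSpace Θ]
    (π : Measure Θ) [IsProbabilityMeasure π]
    (n : ℕ) (hn : 1 ≤ n) (B : ℝ) (hB : 0 ≤ B)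
    (l : ℕ → Θ → ℝ) (hlm : ∀ i, Measurable (l i)) (hlb : ∀ i θ, |l i θ| ≤ B)
    (ZD ZS : ℝ)
    (hZD : ZD = ∫ θ, Real.exp (-(∑ i ∈ Finset.range n, l i θ)) ∂π)
    (hZS : ZS = ∫ θ, Real.exp (-(∑ i ∈ Finset.range (n - 1), l i θ)) ∂π)
    (pD pS : Measure Θ)
    (hpD : pD = π.withDensity
      (fun θ => ENNReal.ofReal (Real.exp (-(∑ i ∈ Finset.range n, l i θ)) / ZD)))
    (hpS : pS = π.withDensity
      (fun θ => ENNReal.ofReal (Real.exp (-(∑ i ∈ Finset.range (n - 1), l i θ)) / ZS)))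
    (g : Θ → ℝ) (hgm : Measurable g) (hgb : ∀ θ, |g θ| ≤ B) :
    |(∫ θ, g θ ∂pS) - ∫ θ, g θ ∂pD| ≤ B * (Real.exp (2 * B) - 1) := by
  obtain ⟨m, rfl⟩ : ∃ m, n = m + 1 := ⟨n - 1, (Nat.succ_pred_eq_of_pos hn).symm⟩
  simp only [Nat.add_sub_cancel] at hZS hpS
  set eS : Θ → ℝ := fun θ => Real.exp (-(∑ i ∈ Finset.range m, l i θ)) with heS
  set eD : Θ → ℝ := fun θ => Real.exp (-(∑ i ∈ Finset.range (m + 1), l i θ)) with heD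
  have heSm : Measurable eS := (Finset.measurable_sum _ fun i _ => hlm i).neg.exp
  have heDm : Measurable eD := (Finset.measurable_sum _ fun i _ => hlm i).neg.exp
  have heSpos : ∀ θ, 0 < eS θ := fun θ => Real.exp_pos _
  have heDpos : ∀ θ, 0 < eD θ := fun θ => Real.exp_pos _
  have hdecomp : ∀ θ, eD θ = eS θ * Real.exp (-(l m θ)) := by
    intro θ
    rw [heD, heS]
    simp only
    rw [Finset.sum_range_succ, neg_add, Real.exp_add]
  -- generic bound for partial sums
  have hsumb : ∀ (k : ℕ) θ, |∑ i ∈ Finset.range k, l i θ| ≤ k * B := by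
    intro k θ
    calc |∑ i ∈ Finset.range k, l i θ| ≤ ∑ i ∈ Finset.range k, |l i θ| :=
          Finset.abs_sum_le_sum_abs _ _
      _ ≤ ∑ _i ∈ Finset.range k, B := Finset.sum_le_sum fun i _ => hlb i θ
      _ = k * B := by simp [mul_comm]
  have heSb : ∀ θ, eS θ ≤ Real.exp (m * B) := by
    intro θ
    have := (abs_le.1 (hsumb m θ)).1
    exact Real.exp_le_exp.2 (by linarith)
  have heDb : ∀ θ, eD θ ≤ Real.exp ((m + 1) * B) := by
    intro θ
    have := (abs_le.1 (hsumb (m + 1) θ)).1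
    exact Real.exp_le_exp.2 (by push_cast at this ⊢; linarith)
  -- integrability of bounded measurable functions
  have hint : ∀ (f : Θ → ℝ) (C : ℝ), Measurable f → (∀ θ, |f θ| ≤ C) → Integrable f π := by
    intro f C hf hb
    exact (integrable_const C).mono' hf.aestronglyMeasurable
      (ae_of_all _ fun θ => by simpa [Real.norm_eq_abs] using hb θ)
  have hintS : Integrable eS π :=
    hint eS (Real.exp (m * B)) heSm fun θ => by
      rw [abs_of_pos (heSpos θ)]; exact heSb θ
  have hintD : Integrable eD π :=
    hint eD (Real.exp ((m + 1) * B)) heDm fun θ => by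
      rw [abs_of_pos (heDpos θ)]; exact heDb θ
  -- positivity of the normalizers
  have hZSpos : 0 < ZS := by
    have h1 : (∫ _θ, Real.exp (-(m * B)) ∂π) ≤ ZS := by
      rw [hZS]
      refine integral_mono (integrable_const _) hintS fun θ => ?_
      have := (abs_le.1 (hsumb m θ)).2
      exact Real.exp_le_exp.2 (by linarith)
    simp only [integral_const, probReal_univ, one_smul] at h1
    linarith [Real.exp_pos (-(m * B))]
  have hZDpos : 0 < ZD := by
    have h1 : (∫ _θ, Real.exp (-((m + 1 : ℕ) * B)) ∂π) ≤ ZD := by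
      rw [hZD]
      refine integral_mono (integrable_const _) hintD fun θ => ?_
      have := (abs_le.1 (hsumb (m + 1) θ)).2
      exact Real.exp_le_exp.2 (by linarith)
    simp only [integral_const, probReal_univ, one_smul] at h1
    linarith [Real.exp_pos (-((m + 1 : ℕ) * B))]
  -- comparison of normalizers
  have hlB : ∀ θ, Real.exp (-B) ≤ Real.exp (-(l m θ)) ∧ Real.exp (-(l m θ)) ≤ Real.exp B := by
    intro θ
    have := abs_le.1 (hlb m θ)
    exact ⟨Real.exp_le_exp.2 (by linarith [this.2]), Real.exp_le_exp.2 (by linarith [this.1])⟩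
  have hZDle : ZD ≤ Real.exp B * ZS := by
    have : ZD ≤ ∫ θ, Real.exp B * eS θ ∂π := by
      rw [hZD]
      refine integral_mono hintD (hintS.const_mul _) fun θ => ?_
      show eD θ ≤ Real.exp B * eS θ
      rw [hdecomp θ]
      calc eS θ * Real.exp (-(l m θ)) ≤ eS θ * Real.exp B :=
            mul_le_mul_of_nonneg_left (hlB θ).2 (heSpos θ).le
        _ = Real.exp B * eS θ := by ring
    rwa [integral_const_mul, ← hZS] at this
  have hZDge : Real.exp (-B) * ZS ≤ ZD := by
    have : (∫ θ, Real.exp (-B) * eS θ ∂π) ≤ ZD := by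
      rw [hZD]
      refine integral_mono (hintS.const_mul _) hintD fun θ => ?_
      show Real.exp (-B) * eS θ ≤ eD θ
      rw [hdecomp θ]
      calc Real.exp (-B) * eS θ = eS θ * Real.exp (-B) := by ring
        _ ≤ eS θ * Real.exp (-(l m θ)) :=
            mul_le_mul_of_nonneg_left (hlB θ).1 (heSpos θ).le
    rwa [integral_const_mul, ← hZS] at this
  -- exponent algebra
  have hexp2 : Real.exp (2 * B) = Real.exp B * Real.exp B := by
    rw [← Real.exp_add]; ring_nf
  have hexpneg2 : Real.exp (-(2 * B)) = Real.exp (-B) * Real.exp (-B) := by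
    rw [← Real.exp_add]; ring_nf
  have hprod : Real.exp B * Real.exp (-B) = 1 := by
    rw [← Real.exp_add]; simp
  have h2B1 : 0 ≤ Real.exp (2 * B) - 1 := by
    have := Real.add_one_le_exp (2 * B); linarith
  -- pointwise key estimate on the densities
  have hkey : ∀ θ, |eS θ / ZS - eD θ / ZD| ≤ (Real.exp (2 * B) - 1) * (eD θ / ZD) := by
    intro θ
    have hup : eS θ * ZD ≤ Real.exp (2 * B) * eD θ * ZS := by
      have h1 : (1 : ℝ) ≤ Real.exp B * Real.exp (-(l m θ)) := by
        calc (1 : ℝ) = Real.exp B * Real.exp (-B) := hprod.symm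
          _ ≤ _ := mul_le_mul_of_nonneg_left (hlB θ).1 (Real.exp_pos B).le
      calc eS θ * ZD ≤ eS θ * (Real.exp B * ZS) :=
            mul_le_mul_of_nonneg_left hZDle (heSpos θ).le
        _ = (Real.exp B * eS θ) * 1 * ZS := by ring
        _ ≤ (Real.exp B * eS θ) * (Real.exp B * Real.exp (-(l m θ))) * ZS := by
            have h0 : 0 ≤ Real.exp B * eS θ := by positivity
            nlinarith [mul_le_mul_of_nonneg_left h1 h0, hZSpos]
        _ = Real.exp (2 * B) * eD θ * ZS := by rw [hexp2, hdecomp θ]; ring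
    have hdown : Real.exp (-(2 * B)) * eD θ * ZS ≤ eS θ * ZD := by
      have h1 : Real.exp (-B) * Real.exp (-(l m θ)) ≤ 1 := by
        calc Real.exp (-B) * Real.exp (-(l m θ)) ≤ Real.exp (-B) * Real.exp B :=
              mul_le_mul_of_nonneg_left (hlB θ).2 (Real.exp_pos (-B)).le
          _ = 1 := by rw [mul_comm]; exact hprod
      calc Real.exp (-(2 * B)) * eD θ * ZS
          = (Real.exp (-B) * eS θ) * (Real.exp (-B) * Real.exp (-(l m θ))) * ZS := by
            rw [hexpneg2, hdecomp θ]; ring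
        _ ≤ (Real.exp (-B) * eS θ) * 1 * ZS := by
            have h0 : 0 ≤ Real.exp (-B) * eS θ := by positivity
            nlinarith [mul_le_mul_of_nonneg_left h1 h0, hZSpos]
        _ = eS θ * (Real.exp (-B) * ZS) := by ring
        _ ≤ eS θ * ZD := mul_le_mul_of_nonneg_left hZDge (heSpos θ).le
    have hfup : eS θ / ZS ≤ Real.exp (2 * B) * (eD θ / ZD) := by
      rw [mul_div_assoc'] at *
      exact (div_le_div_iff₀ hZSpos hZDpos).2 hup
    have hfdown : Real.exp (-(2 * B)) * (eD θ / ZD) ≤ eS θ / ZS := by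
      rw [mul_div_assoc'] at *
      exact (div_le_div_iff₀ hZDpos hZSpos).2 (by linarith [hdown])
    have hfDnn : 0 ≤ eD θ / ZD := div_nonneg (heDpos θ).le hZDpos.le
    have hsum2 : (2 : ℝ) ≤ Real.exp (2 * B) + Real.exp (-(2 * B)) := by
      nlinarith [sq_nonneg (Real.exp B - Real.exp (-B)), hprod, hexp2, hexpneg2]
    rw [abs_le]
    constructor
    · have : (1 - Real.exp (-(2 * B))) * (eD θ / ZD) ≤ (Real.exp (2 * B) - 1) * (eD θ / ZD) :=
        mul_le_mul_of_nonneg_right (by linarith) hfDnn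
      nlinarith [hfdown]
    · nlinarith [hfup]
  -- express the two expectations as integrals against π
  have hrep : ∀ (e : Θ → ℝ) (Z : ℝ), Measurable e → (∀ θ, 0 < e θ) → 0 < Z →
      (∫ θ, g θ ∂(π.withDensity (fun θ => ENNReal.ofReal (e θ / Z)))) =
        ∫ θ, (e θ / Z) * g θ ∂π := by
    intro e Z hem hepos hZpos
    have hmeas : Measurable (fun θ => (e θ / Z).toNNReal) :=
      (hem.div_const Z).real_toNNReal
    have hcast : (fun θ => ENNReal.ofReal (e θ / Z)) =
        fun θ => (((e θ / Z).toNNReal : ℝ≥0) : ℝ≥0∞) := rfl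
    rw [hcast, integral_withDensity_eq_integral_smul hmeas]
    refine integral_congr_ae (ae_of_all _ fun θ => ?_)
    simp [NNReal.smul_def, Real.coe_toNNReal _ (div_nonneg (hepos θ).le hZpos.le)]
  have hIS : (∫ θ, g θ ∂pS) = ∫ θ, (eS θ / ZS) * g θ ∂π := by
    rw [hpS]; exact hrep eS ZS heSm heSpos hZSpos
  have hID : (∫ θ, g θ ∂pD) = ∫ θ, (eD θ / ZD) * g θ ∂π := by
    rw [hpD]; exact hrep eD ZD heDm heDpos hZDpos
  -- integrability of the products
  have hintSg : Integrable (fun θ => (eS θ / ZS) * g θ) π := by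
    refine hint _ (Real.exp (m * B) / ZS * B) ((heSm.div_const ZS).mul hgm) fun θ => ?_
    rw [abs_mul, abs_div, abs_of_pos (heSpos θ), abs_of_pos hZSpos]
    gcongr
    · exact heSb θ
    · exact hgb θ
  have hintDg : Integrable (fun θ => (eD θ / ZD) * g θ) π := by
    refine hint _ (Real.exp ((m + 1) * B) / ZD * B) ((heDm.div_const ZD).mul hgm) fun θ => ?_
    rw [abs_mul, abs_div, abs_of_pos (heDpos θ), abs_of_pos hZDpos]
    gcongr
    · exact heDb θ
    · exact hgb θ
  have hintBound : Integrable (fun θ => (Real.exp (2 * B) - 1) * (eD θ / ZD) * B) π := by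
    have : Integrable (fun θ => eD θ / ZD) π := hintD.div_const ZD
    simpa [mul_comm, mul_assoc, mul_left_comm] using (this.const_mul (Real.exp (2 * B) - 1)).mul_const B
  rw [hIS, hID, ← integral_sub hintSg hintDg]
  calc |∫ θ, ((eS θ / ZS) * g θ - (eD θ / ZD) * g θ) ∂π|
      ≤ ∫ θ, |(eS θ / ZS) * g θ - (eD θ / ZD) * g θ| ∂π := by
        simpa [Real.norm_eq_abs] using
          norm_integral_le_integral_norm (μ := π)
            (fun θ => (eS θ / ZS) * g θ - (eD θ / ZD) * g θ)
    _ ≤ ∫ θ, (Real.exp (2 * B) - 1) * (eD θ / ZD) * B ∂π := by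
        refine integral_mono (hintSg.sub hintDg).abs hintBound fun θ => ?_
        rw [← sub_mul, abs_mul]
        exact mul_le_mul (hkey θ) (hgb θ) (abs_nonneg _)
          (mul_nonneg h2B1 (div_nonneg (heDpos θ).le hZDpos.le))
    _ = ((Real.exp (2 * B) - 1) * B / ZD) * ∫ θ, eD θ ∂π := by
        rw [← integral_const_mul]
        refine integral_congr_ae (ae_of_all _ fun θ => ?_)
        ring
    _ = B * (Real.exp (2 * B) - 1) := by
        rw [← hZD]; field_simp
end
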